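/- Let u, S₁, S₂ be smooth ℝ³-valued fields on ℝ × ℝ³ such that the one-forms S₁·dx and S₂·dx are both Lie dragged by the flow, i.e. ∂S_i/∂t − u×(∇×S_i) + ∇(u·S_i) = 0 for i = 1, 2. Then the two-form (S₁×S₂)·dS is Lie dragged by the flow: the field C = S₁ × S₂ satisfies ∂C/∂t − ∇×(u×C) + u(∇·C) = 0. -/

import Mathlib

noncomputable section

/-- Vectors in ℝ³. -/
abbrev Vec3 : Type := Fin 3 → ℝ

/-- Points of space-time: `(t, x)` with `t : ℝ`, `x : Fin 3 → ℝ`. -/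
abbrev Pt : Type := ℝ × Vec3

/-- Euclidean dot product on ℝ³. -/
def dot3 (a b : Vec3) : ℝ := ∑ i, a i * b i

/-- Cross product on ℝ³. -/
def cross3 (a b : Vec3) : Vec3 :=
  ![a 1 * b 2 - a 2 * b 1, a 2 * b 0 - a 0 * b 2, a 0 * b 1 - a 1 * b 0]

/-- Spatial partial derivative ∂f/∂xᵢ of a scalar field. -/
def pd (i : Fin 3) (f : Pt → ℝ) (p : Pt) : ℝ :=
  fderiv ℝ (fun x => f (p.1, x)) p.2 (Pi.single i 1)

/-- Time derivative ∂f/∂t of a scalar field. -/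
def dt (f : Pt → ℝ) (p : Pt) : ℝ := deriv (fun s => f (s, p.2)) p.1

/-- Time derivative of a vector field, componentwise. -/
def dtVec (F : Pt → Vec3) (p : Pt) : Vec3 := fun i => dt (fun q => F q i) p

/-- Spatial gradient ∇f of a scalar field. -/
def grad3 (f : Pt → ℝ) (p : Pt) : Vec3 := fun i => pd i f p

/-- Spatial divergence ∇·F of a vector field. -/
def div3 (F : Pt → Vec3) (p : Pt) : ℝ := ∑ i, pd i (fun q => F q i) p

/-- Spatial curl ∇×F of a vector field. -/
def curl3 (F : Pt → Vec3) (p : Pt) : Vec3 :=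
  ![pd 1 (fun q => F q 2) p - pd 2 (fun q => F q 1) p,
    pd 2 (fun q => F q 0) p - pd 0 (fun q => F q 2) p,
    pd 0 (fun q => F q 1) p - pd 1 (fun q => F q 0) p]

/-- Directional derivative (u·∇)f of a scalar field. -/
def dirD (u : Pt → Vec3) (f : Pt → ℝ) (p : Pt) : ℝ := ∑ i, u p i * pd i f p

/-- Directional derivative (u·∇)F of a vector field. -/
def dirDVec (u F : Pt → Vec3) (p : Pt) : Vec3 :=
  fun j => ∑ i, u p i * pd i (fun q => F q j) p

/-- (∇u)ᵀ·A, the vector with i-th component ∑ⱼ (∂uʲ/∂xⁱ) Aⱼ. -/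
def gradTdot (u A : Pt → Vec3) (p : Pt) : Vec3 :=
  fun i => ∑ j, pd i (fun q => u q j) p * A p j

/-- A field is smooth when it is C^∞ jointly in time and space. -/
def SmoothS (f : Pt → ℝ) : Prop := ContDiff ℝ (⊤ : ℕ∞) f

/-- A vector field is smooth when it is C^∞ jointly in time and space. -/
def SmoothV (F : Pt → Vec3) : Prop := ContDiff ℝ (⊤ : ℕ∞) F


section Helpers

lemma diffAt_space {f : Pt → ℝ} (hf : SmoothS f) (p : Pt) :
    DifferentiableAt ℝ (fun x : Vec3 => f (p.1, x)) p.2 := by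
  exact DifferentiableAt.comp p.2 ((hf.differentiable (by simp)) (p.1, p.2))
    ((differentiableAt_const _).prodMk differentiableAt_id)

lemma diffAt_time {f : Pt → ℝ} (hf : SmoothS f) (p : Pt) :
    DifferentiableAt ℝ (fun s : ℝ => f (s, p.2)) p.1 := by
  exact DifferentiableAt.comp p.1 ((hf.differentiable (by simp)) (p.1, p.2))
    (differentiableAt_id.prodMk (differentiableAt_const _))

lemma pd_mul {f g : Pt → ℝ} (hf : SmoothS f) (hg : SmoothS g) (i : Fin 3) (p : Pt) :
    pd i (fun q => f q * g q) p = pd i f p * g p + f p * pd i g p := by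
  unfold pd
  rw [show (fun x : Vec3 => f (p.1, x) * g (p.1, x)) = fun x => f (p.1, x) * g (p.1, x) from rfl,
    fderiv_fun_mul (diffAt_space hf p) (diffAt_space hg p)]
  simp [smul_eq_mul]
  ring

lemma pd_add {f g : Pt → ℝ} (hf : SmoothS f) (hg : SmoothS g) (i : Fin 3) (p : Pt) :
    pd i (fun q => f q + g q) p = pd i f p + pd i g p := by
  unfold pd
  rw [fderiv_fun_add (diffAt_space hf p) (diffAt_space hg p)]
  simp

lemma pd_sub {f g : Pt → ℝ} (hf : SmoothS f) (hg : SmoothS g) (i : Fin 3) (p : Pt) :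
    pd i (fun q => f q - g q) p = pd i f p - pd i g p := by
  unfold pd
  rw [fderiv_fun_sub (diffAt_space hf p) (diffAt_space hg p)]
  simp

lemma dt_mul {f g : Pt → ℝ} (hf : SmoothS f) (hg : SmoothS g) (p : Pt) :
    dt (fun q => f q * g q) p = dt f p * g p + f p * dt g p := by
  unfold dt
  rw [deriv_fun_mul (diffAt_time hf p) (diffAt_time hg p)]

lemma dt_add {f g : Pt → ℝ} (hf : SmoothS f) (hg : SmoothS g) (p : Pt) :
    dt (fun q => f q + g q) p = dt f p + dt g p := by
  unfold dt
  rw [deriv_fun_add (diffAt_time hf p) (diffAt_time hg p)]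

lemma dt_sub {f g : Pt → ℝ} (hf : SmoothS f) (hg : SmoothS g) (p : Pt) :
    dt (fun q => f q - g q) p = dt f p - dt g p := by
  unfold dt
  rw [deriv_fun_sub (diffAt_time hf p) (diffAt_time hg p)]

end Helpers

set_option maxHeartbeats 2000000 in
/-- the wedge product of two advected 1-forms is an advected
    2-form: C = S₁ × S₂ satisfies ∂C/∂t − ∇×(u×C) + u(∇·C) = 0. -/
theorem wedge_of_advected_one_forms
    (u S₁ S₂ : Pt → Vec3)
    (hu : SmoothV u) (hS₁ : SmoothV S₁) (hS₂ : SmoothV S₂)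
    (hlie₁ : ∀ p : Pt,
      dtVec S₁ p - cross3 (u p) (curl3 S₁ p)
        + grad3 (fun q => dot3 (u q) (S₁ q)) p = 0)
    (hlie₂ : ∀ p : Pt,
      dtVec S₂ p - cross3 (u p) (curl3 S₂ p)
        + grad3 (fun q => dot3 (u q) (S₂ q)) p = 0) :
    ∀ p : Pt,
      dtVec (fun q => cross3 (S₁ q) (S₂ q)) p
        - curl3 (fun q => cross3 (u q) (cross3 (S₁ q) (S₂ q))) p
        + div3 (fun q => cross3 (S₁ q) (S₂ q)) p • u p = 0 := by
  have hu' : ContDiff ℝ (⊤ : ℕ∞) u := hu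
  have hS₁' : ContDiff ℝ (⊤ : ℕ∞) S₁ := hS₁
  have hS₂' : ContDiff ℝ (⊤ : ℕ∞) S₂ := hS₂
  intro p
  have h10 := congrFun (hlie₁ p) 0
  have h11 := congrFun (hlie₁ p) 1
  have h12 := congrFun (hlie₁ p) 2
  have h20 := congrFun (hlie₂ p) 0
  have h21 := congrFun (hlie₂ p) 1
  have h22 := congrFun (hlie₂ p) 2
  simp (disch := unfold SmoothS; fun_prop) only [dtVec, grad3, div3, curl3, cross3, dot3,
    Fin.reduceFinMk, Fin.isValue, Fin.sum_univ_three, Matrix.cons_val_zero, Matrix.cons_val_one, Matrix.head_cons,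
    Matrix.cons_val_two, Matrix.tail_cons, Pi.add_apply, Pi.sub_apply, Pi.zero_apply,
    Pi.smul_apply, smul_eq_mul, pd_mul, pd_add, pd_sub, dt_mul, dt_add, dt_sub]
    at h10 h11 h12 h20 h21 h22
  ext i
  fin_cases i
  · simp (disch := unfold SmoothS; fun_prop) only [dtVec, grad3, div3, curl3, cross3, dot3,
      Fin.reduceFinMk, Fin.isValue, Fin.sum_univ_three, Matrix.cons_val_zero, Matrix.cons_val_one, Matrix.head_cons,
      Matrix.cons_val_two, Matrix.tail_cons, Pi.add_apply, Pi.sub_apply, Pi.zero_apply,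
      Pi.smul_apply, smul_eq_mul, pd_mul, pd_add, pd_sub, dt_mul, dt_add, dt_sub]
    linear_combination (S₂ p 2) * h11 - (S₂ p 1) * h12 + (S₁ p 1) * h22 - (S₁ p 2) * h21
  · simp (disch := unfold SmoothS; fun_prop) only [dtVec, grad3, div3, curl3, cross3, dot3,
      Fin.reduceFinMk, Fin.isValue, Fin.sum_univ_three, Matrix.cons_val_zero, Matrix.cons_val_one, Matrix.head_cons,
      Matrix.cons_val_two, Matrix.tail_cons, Pi.add_apply, Pi.sub_apply, Pi.zero_apply,
      Pi.smul_apply, smul_eq_mul, pd_mul, pd_add, pd_sub, dt_mul, dt_add, dt_sub]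
    linear_combination (S₂ p 0) * h12 - (S₂ p 2) * h10 + (S₁ p 2) * h20 - (S₁ p 0) * h22
  · simp (disch := unfold SmoothS; fun_prop) only [dtVec, grad3, div3, curl3, cross3, dot3,
      Fin.reduceFinMk, Fin.isValue, Fin.sum_univ_three, Matrix.cons_val_zero, Matrix.cons_val_one, Matrix.head_cons,
      Matrix.cons_val_two, Matrix.tail_cons, Pi.add_apply, Pi.sub_apply, Pi.zero_apply,
      Pi.smul_apply, smul_eq_mul, pd_mul, pd_add, pd_sub, dt_mul, dt_add, dt_sub]
    linear_combination (S₂ p 1) * h10 - (S₂ p 0) * h11 + (S₁ p 0) * h21 - (S₁ p 1) * h20
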